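/- Let n ≥ 1, let Ω be a nonempty compact convex set of symmetric positive definite n×n real matrices, let H₀ ∈ Ω, let B be a symmetric n×n real matrix, and let m > 0 satisfy √(Tr(H₀ B H₀ B)) ≤ m. Then for every η with 0 < η ≤ 1/(16m) and every H ∈ Ω, it holds that ⟨H₀ − H, −B⟩ − D_F(H, H₀)/η ≤ 8η · Tr(H₀ B H₀ B). -/

import Mathlib

open scoped BigOperators Matrix

/-- The Bregman divergence associated with the log-determinant barrier
`F(X) = -log det X`, namely
`D_F(A, B) = -log det A + log det B + Tr(B⁻¹ (A - B))`. -/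
noncomputable def logDetBreg {n : Type*} [Fintype n] [DecidableEq n]
    (A B : Matrix n n ℝ) : ℝ :=
  -Real.log A.det + Real.log B.det + (B⁻¹ * (A - B)).trace

section Helpers
open Matrix
variable {N : ℕ}

-- trace of product as entrywise sum
lemma trace_mul_sum (P Q : Matrix (Fin N) (Fin N) ℝ) :
    (P * Q).trace = ∑ i, ∑ j, P i j * Q j i := by
  simp [Matrix.trace, Matrix.mul_apply, Matrix.diag]

-- Cauchy-Schwarz for trace, symmetric matrices
lemma trace_CS {P Q : Matrix (Fin N) (Fin N) ℝ} (hP : Pᵀ = P) (hQ : Qᵀ = Q) :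
    (P * Q).trace ≤ Real.sqrt ((P * P).trace) * Real.sqrt ((Q * Q).trace) := by
  have hPs : ∀ i j, P j i = P i j := fun i j => congrFun (congrFun hP i) j
  have hQs : ∀ i j, Q j i = Q i j := fun i j => congrFun (congrFun hQ i) j
  have h1 : (P * Q).trace = ∑ p : Fin N × Fin N, P p.1 p.2 * Q p.1 p.2 := by
    rw [trace_mul_sum, ← Finset.sum_product']
    exact Finset.sum_congr rfl fun p _ => by rw [hQs]
  have h2 : (P * P).trace = ∑ p : Fin N × Fin N, (P p.1 p.2) ^ 2 := by
    rw [trace_mul_sum, ← Finset.sum_product']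
    exact Finset.sum_congr rfl fun p _ => by rw [hPs]; ring
  have h3 : (Q * Q).trace = ∑ p : Fin N × Fin N, (Q p.1 p.2) ^ 2 := by
    rw [trace_mul_sum, ← Finset.sum_product']
    exact Finset.sum_congr rfl fun p _ => by rw [hQs]; ring
  rw [h1, h2, h3]
  exact Real.sum_mul_le_sqrt_mul_sqrt _ _ _

-- trace of hermitian matrix = sum of eigenvalues; trace of square = sum of squares
lemma trace_eqs {A : Matrix (Fin N) (Fin N) ℝ} (hA : A.IsHermitian) :
    A.trace = ∑ i, hA.eigenvalues i ∧ (A * A).trace = ∑ i, (hA.eigenvalues i) ^ 2 := by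
  set U : Matrix (Fin N) (Fin N) ℝ := (hA.eigenvectorUnitary : Matrix (Fin N) (Fin N) ℝ)
  have hU : U * star U = 1 := Matrix.mem_unitaryGroup_iff.mp hA.eigenvectorUnitary.2
  have hdiag : star U * A * U = Matrix.diagonal (RCLike.ofReal ∘ hA.eigenvalues) :=
    by simpa [Unitary.conjStarAlgAut_apply] using hA.conjStarAlgAut_star_eigenvectorUnitary
  have key : ∀ B : Matrix (Fin N) (Fin N) ℝ, (star U * B * U).trace = B.trace := by
    intro B
    rw [Matrix.trace_mul_cycle, hU, Matrix.one_mul]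
  constructor
  · have := key A
    rw [hdiag] at this
    rw [← this]
    simp [Matrix.trace_diagonal]
  · have hsq : star U * (A * A) * U = (star U * A * U) * (star U * A * U) := by
      have : U * star U = 1 := hU
      calc star U * (A * A) * U = star U * A * (U * star U) * A * U := by
            rw [this]; noncomm_ring
        _ = (star U * A * U) * (star U * A * U) := by noncomm_ring
    have := key (A * A)
    rw [hsq, hdiag] at this
    rw [← this, Matrix.diagonal_mul_diagonal]
    simp [Matrix.trace_diagonal]
    exact Finset.sum_congr rfl fun i _ => by simp [sq]

lemma phi_sqrt {x : ℝ} (hx : 0 < x) : (Real.sqrt x - 1)^2 ≤ x - 1 - Real.log x := by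
  have h1 : Real.log (Real.sqrt x) ≤ Real.sqrt x - 1 :=
    Real.log_le_sub_one_of_pos (Real.sqrt_pos.mpr hx)
  rw [Real.log_sqrt hx.le] at h1
  have h2 : Real.sqrt x ^ 2 = x := Real.sq_sqrt hx.le
  nlinarith

lemma phi_ge_small {lam s : ℝ} (hl : 0 < lam) (hs2 : (lam - 1)^2 ≤ s^2)
    (hs0 : 0 ≤ s) (hs : s ≤ 1) :
    (lam - 1)^2 / 16 ≤ lam - 1 - Real.log lam := by
  refine le_trans ?_ (phi_sqrt hl)
  have h2 : Real.sqrt lam ^ 2 = lam := Real.sq_sqrt hl.le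
  have h3 : 0 ≤ Real.sqrt lam := Real.sqrt_nonneg _
  have hlam : lam ≤ 2 := by nlinarith
  have ht : (Real.sqrt lam + 1)^2 ≤ 16 := by nlinarith
  have key : 0 ≤ (Real.sqrt lam - 1)^2 * (16 - (Real.sqrt lam + 1)^2) :=
    mul_nonneg (sq_nonneg _) (by linarith)
  nlinarith

lemma phi_ge_big {lam s : ℝ} (hl : 0 < lam) (hs2 : (lam - 1)^2 ≤ s^2) (hs : 1 ≤ s) :
    (lam - 1)^2 / (16 * s) ≤ lam - 1 - Real.log lam := by
  refine le_trans ?_ (phi_sqrt hl)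
  have h2 : Real.sqrt lam ^ 2 = lam := Real.sq_sqrt hl.le
  have h3 : 0 ≤ Real.sqrt lam := Real.sqrt_nonneg _
  have hlam : lam ≤ 1 + s := by nlinarith
  rw [div_le_iff₀ (by positivity)]
  -- (lam-1)^2 = (t-1)^2 (t+1)^2, (t+1)^2 ≤ 2 lam + 2 ≤ 2(1+s)+2 ≤ 16 s
  have ht : (Real.sqrt lam + 1)^2 ≤ 16 * s := by nlinarith
  have key : 0 ≤ (Real.sqrt lam - 1)^2 * (16 * s - (Real.sqrt lam + 1)^2) :=
    mul_nonneg (sq_nonneg _) (by linarith)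
  nlinarith

lemma scalar_final (lam : Fin N → ℝ) (hl : ∀ i, 0 < lam i) {c η : ℝ}
    (hc : 0 ≤ c) (hη : 0 < η) (hηc : η * c ≤ 1 / 16) :
    Real.sqrt (∑ i, (lam i - 1)^2) * c
      - (∑ i, (lam i - 1 - Real.log (lam i))) / η ≤ 8 * η * c^2 := by
  set s2 : ℝ := ∑ i, (lam i - 1)^2 with hs2def
  set Φ : ℝ := ∑ i, (lam i - 1 - Real.log (lam i)) with hΦdef
  have hs2 : 0 ≤ s2 := Finset.sum_nonneg fun i _ => sq_nonneg _
  set s : ℝ := Real.sqrt s2 with hsdef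
  have hs0 : 0 ≤ s := Real.sqrt_nonneg _
  have hss : s^2 = s2 := Real.sq_sqrt hs2
  have hterm : ∀ i : Fin N, (lam i - 1)^2 ≤ s^2 := by
    intro i
    rw [hss]
    exact Finset.single_le_sum (fun j _ => sq_nonneg (lam j - 1)) (Finset.mem_univ i)
  rcases le_or_gt s 1 with hs1 | hs1
  · have hΦ : s^2 / 16 ≤ Φ := by
      rw [hss, hs2def, Finset.sum_div]
      exact Finset.sum_le_sum fun i _ => phi_ge_small (hl i) (hss ▸ hterm i) hs0 hs1
    have key : s * c - 8 * η * c^2 ≤ Φ / η := by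
      rw [le_div_iff₀ hη]
      nlinarith [sq_nonneg (s - 8 * η * c), sq_nonneg c]
    linarith
  · have hΦ : s / 16 ≤ Φ := by
      have : s^2 / (16 * s) = s / 16 := by
        field_simp
      rw [← this, hss, hs2def, Finset.sum_div]
      exact Finset.sum_le_sum fun i _ => phi_ge_big (hl i) (hss ▸ hterm i) hs1.le
    have key : s * c ≤ Φ / η := by
      rw [le_div_iff₀ hη]
      nlinarith
    nlinarith [sq_nonneg c]

lemma posdef_conj {A C : Matrix (Fin N) (Fin N) ℝ} (hA : A.PosDef) (hC : C.IsHermitian)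
    (hCu : IsUnit C) : (C * A * C).PosDef := by
  have h := hA.conjTranspose_mul_mul_same (B := C) (Matrix.mulVec_injective_iff_isUnit.mpr hCu)
  rwa [hC.eq] at h

lemma det_eq {A : Matrix (Fin N) (Fin N) ℝ} (hA : A.IsHermitian) :
    A.det = ∏ i, hA.eigenvalues i := by
  simpa using hA.det_eq_prod_eigenvalues

end Helpers

theorem stmt2 {n : ℕ} (hn : 1 ≤ n) (Ω : Set (Matrix (Fin n) (Fin n) ℝ))
    (hne : Ω.Nonempty) (hcompact : IsCompact Ω) (hconv : Convex ℝ Ω)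
    (hpd : ∀ X ∈ Ω, X.PosDef) (H₀ : Matrix (Fin n) (Fin n) ℝ) (hH₀ : H₀ ∈ Ω)
    (B : Matrix (Fin n) (Fin n) ℝ) (hB : B.IsSymm) (m : ℝ) (hm : 0 < m)
    (hmB : Real.sqrt ((H₀ * B * H₀ * B).trace) ≤ m) :
    ∀ η : ℝ, 0 < η → η ≤ 1 / (16 * m) → ∀ H ∈ Ω,
      ((H₀ - H)ᵀ * (-B)).trace - logDetBreg H H₀ / η ≤
        8 * η * (H₀ * B * H₀ * B).trace := by
  intro η hη hηm H hH
  have hpd0 : H₀.PosDef := hpd H₀ hH₀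
  have hpdH : H.PosDef := hpd H hH
  open scoped MatrixOrder in set S : Matrix (Fin n) (Fin n) ℝ := CFC.sqrt H₀ with hSdef
  open scoped MatrixOrder in have hSS : S * S = H₀ := CFC.sqrt_mul_sqrt_self H₀ hpd0.posSemidef.nonneg
  open scoped MatrixOrder in have hSh : S.IsHermitian := by simpa using (CFC.sqrt_nonneg H₀).1
  have hdetSS : S.det * S.det = H₀.det := by rw [← Matrix.det_mul, hSS]
  have hdetSne : S.det ≠ 0 := by
    intro h0
    rw [h0, zero_mul] at hdetSS
    exact (hpd0.det_pos).ne hdetSS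
  have hSu : IsUnit S := S.isUnit_iff_isUnit_det.mpr hdetSne.isUnit
  have hS1 : S⁻¹ * S = 1 := Matrix.nonsing_inv_mul _ hdetSne.isUnit
  have hS1' : S * S⁻¹ = 1 := Matrix.mul_nonsing_inv _ hdetSne.isUnit
  have hSinvh : S⁻¹.IsHermitian := hSh.inv
  have hSinvu : IsUnit (S⁻¹ : Matrix (Fin n) (Fin n) ℝ) := Matrix.isUnit_nonsing_inv_iff.mpr hSu
  set X : Matrix (Fin n) (Fin n) ℝ := S⁻¹ * H * S⁻¹ with hXdef
  have hXpd : X.PosDef := posdef_conj hpdH hSinvh hSinvu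
  have hXh : X.IsHermitian := hXpd.1
  set lam : Fin n → ℝ := hXh.eigenvalues with hlamdef
  have hlampos : ∀ i, 0 < lam i := fun i => hXpd.eigenvalues_pos i
  have htr : X.trace = ∑ i, lam i := (trace_eqs hXh).1
  have htr2 : (X * X).trace = ∑ i, (lam i) ^ 2 := (trace_eqs hXh).2
  have hdetX : X.det = ∏ i, lam i := det_eq hXh
  have hdetXpos : 0 < X.det := hXpd.det_pos
  -- matrix algebra
  have hH0inv : H₀⁻¹ = S⁻¹ * S⁻¹ := by rw [← hSS, Matrix.mul_inv_rev]
  have hHrec : H = S * X * S := by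
    rw [hXdef, show S * (S⁻¹ * H * S⁻¹) * S = (S * S⁻¹) * H * (S⁻¹ * S) by
      simp only [Matrix.mul_assoc], hS1, hS1', Matrix.one_mul, Matrix.mul_one]
  -- Bregman divergence in eigenvalue form
  have hdetH : H.det = X.det * H₀.det := by
    rw [hHrec, Matrix.det_mul, Matrix.det_mul]
    rw [← hdetSS]; ring
  have htrterm : (H₀⁻¹ * (H - H₀)).trace = X.trace - (n : ℝ) := by
    have e1 : H₀⁻¹ * (H - H₀) = S⁻¹ * S⁻¹ * H - S⁻¹ * S⁻¹ * H₀ := by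
      rw [hH0inv, Matrix.mul_sub]
    have e2 : (S⁻¹ * S⁻¹ * H).trace = X.trace := by
      rw [hXdef, Matrix.trace_mul_cycle S⁻¹ H S⁻¹]
    have e3 : S⁻¹ * S⁻¹ * H₀ = 1 := by
      rw [← hSS, show S⁻¹ * S⁻¹ * (S * S) = S⁻¹ * (S⁻¹ * S) * S by simp only [Matrix.mul_assoc],
        hS1, Matrix.mul_one, hS1]
    rw [e1, Matrix.trace_sub, e2, e3, Matrix.trace_one]
    simp
  have hBreg : logDetBreg H H₀ = ∑ i, (lam i - 1 - Real.log (lam i)) := by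
    rw [logDetBreg, htrterm, hdetH, Real.log_mul hdetXpos.ne' hpd0.det_pos.ne', hdetX,
      Real.log_prod (fun i _ => (hlampos i).ne'), htr]
    rw [Finset.sum_sub_distrib, Finset.sum_sub_distrib]
    simp [Finset.card_univ]
    ring
  -- LHS trace in terms of X and M
  set M : Matrix (Fin n) (Fin n) ℝ := S * B * S with hMdef
  have hBt : Bᵀ = B := hB
  have hSt : Sᵀ = S := by
    rw [← Matrix.conjTranspose_eq_transpose_of_trivial]; exact hSh.eq
  have hXt : Xᵀ = X := by
    rw [← Matrix.conjTranspose_eq_transpose_of_trivial]; exact hXh.eq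
  have hMt : Mᵀ = M := by
    rw [hMdef, Matrix.transpose_mul, Matrix.transpose_mul, hBt, hSt]
    simp only [Matrix.mul_assoc]
  have hH0t : H₀ᵀ = H₀ := by
    rw [← Matrix.conjTranspose_eq_transpose_of_trivial]; exact hpd0.1.eq
  have hHt : Hᵀ = H := by
    rw [← Matrix.conjTranspose_eq_transpose_of_trivial]; exact hpdH.1.eq
  have hLHS : ((H₀ - H)ᵀ * (-B)).trace = ((X - 1) * M).trace := by
    have e0 : (H₀ - H)ᵀ = H₀ - H := by rw [Matrix.transpose_sub, hH0t, hHt]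
    have e1 : H - H₀ = S * (X - 1) * S := by
      rw [Matrix.mul_sub, Matrix.sub_mul, Matrix.mul_one, hSS, ← hHrec]
    have e2 : ((H₀ - H)ᵀ * (-B)).trace = ((H - H₀) * B).trace := by
      rw [e0]
      rw [show (H₀ - H) * (-B) = (H - H₀) * B by noncomm_ring]
    rw [e2, e1, hMdef]
    rw [show S * (X - 1) * S * B = S * ((X - 1) * (S * B)) by simp only [Matrix.mul_assoc],
      Matrix.trace_mul_comm]
    simp only [Matrix.mul_assoc]
  -- quantities
  set T : ℝ := (H₀ * B * H₀ * B).trace with hTdef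
  have hMM : (M * M).trace = T := by
    have e1 : M * M = S * (B * H₀ * B * S) := by
      rw [hMdef, ← hSS]; simp only [Matrix.mul_assoc]
    rw [e1, Matrix.trace_mul_comm, show B * H₀ * B * S * S = B * (H₀ * B * (S * S)) by
      simp only [Matrix.mul_assoc], hSS, Matrix.trace_mul_comm, hTdef]
  have hT0 : 0 ≤ T := by
    rw [← hMM, trace_mul_sum]
    refine Finset.sum_nonneg fun i _ => Finset.sum_nonneg fun j _ => ?_
    have : M j i = M i j := congrFun (congrFun hMt i) j
    rw [this]
    exact mul_self_nonneg _
  have hXX : ((X - 1) * (X - 1)).trace = ∑ i, (lam i - 1) ^ 2 := by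
    have e1 : (X - 1) * (X - 1) = X * X - X - X + 1 := by noncomm_ring
    rw [e1, Matrix.trace_add, Matrix.trace_sub, Matrix.trace_sub, htr2, htr, Matrix.trace_one]
    rw [show ∑ i, (lam i - 1) ^ 2 = ∑ i, ((lam i)^2 - lam i - lam i + 1) from
      Finset.sum_congr rfl fun i _ => by ring]
    simp [Finset.sum_add_distrib, Finset.sum_sub_distrib, Finset.card_univ]
  -- Cauchy-Schwarz
  have hXm1t : (X - 1)ᵀ = X - 1 := by
    rw [Matrix.transpose_sub, hXt, Matrix.transpose_one]
  have hCS : ((X - 1) * M).trace ≤ Real.sqrt (∑ i, (lam i - 1) ^ 2) * Real.sqrt T := by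
    have := trace_CS hXm1t hMt
    rwa [hXX, hMM] at this
  -- scalar conclusion
  have hc0 : 0 ≤ Real.sqrt T := Real.sqrt_nonneg _
  have hsqT : Real.sqrt T ^ 2 = T := Real.sq_sqrt hT0
  have hηc : η * Real.sqrt T ≤ 1 / 16 := by
    have h1 : Real.sqrt T ≤ m := hmB
    have h2 : η * m ≤ 1 / 16 := by
      have h3 : η * m ≤ 1 / (16 * m) * m := mul_le_mul_of_nonneg_right hηm hm.le
      have h4 : 1 / (16 * m) * m = 1 / 16 := by field_simp
      linarith
    calc η * Real.sqrt T ≤ η * m := mul_le_mul_of_nonneg_left h1 hη.le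
      _ ≤ 1 / 16 := h2
  have hfin := scalar_final lam hlampos hc0 hη hηc
  rw [hLHS, hBreg]
  calc ((X - 1) * M).trace - (∑ i, (lam i - 1 - Real.log (lam i))) / η
      ≤ Real.sqrt (∑ i, (lam i - 1) ^ 2) * Real.sqrt T
        - (∑ i, (lam i - 1 - Real.log (lam i))) / η := by linarith
    _ ≤ 8 * η * Real.sqrt T ^ 2 := by linarith [hfin]
    _ = 8 * η * T := by rw [hsqT]
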